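/- For all x > 0, the exponential integral satisfies (x/2)·ln(1 + 2/x) ≤ x·e^x·E₁(x) ≤ x·ln(1 + 1/x). In particular, for an exponentially distributed random variable ξ with mean μ and constant b > 0, (b/(2μ))·ln(1 + 2μ/b) ≤ E[b/(b+ξ)] ≤ (b/μ)·ln(1 + μ/b). -/

import Mathlib

open MeasureTheory Real Set

/-- The exponential integral E₁(x) = ∫ₓ^∞ e^{−t}/t dt. -/
noncomputable def expIntegralE1 (x : ℝ) : ℝ := ∫ t in Set.Ioi x, Real.exp (-t) / t

namespace ExpBoundsAux

open Filter




lemma logA {v : ℝ} (hv : 0 < v) : 1/v - 1/(v*(v+1)) ≤ Real.log (1 + 1/v) := by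
  have h1 : (0:ℝ) < 1 + 1/v := by positivity
  have h2 := Real.log_le_sub_one_of_pos (x := (1+1/v)⁻¹) (by positivity)
  rw [Real.log_inv] at h2
  have h3 : (1+1/v)⁻¹ - 1 = -((1/v)/(1+1/v)) := by field_simp; ring
  have h4 : (1/v)/(1+1/v) ≤ Real.log (1+1/v) := by
    rw [h3] at h2; linarith
  have h5 : 1/v - 1/(v*(v+1)) = (1/v)/(1+1/v) := by
    field_simp
    ring
  linarith

lemma hderB {s : ℝ} (hs : 0 ≤ s) :
    HasDerivAt (fun s : ℝ => s*(s+2)/(2*(s+1)) - Real.log (1+s)) (s^2/(2*(s+1)^2)) s := by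
  have h1 : (0:ℝ) < 1 + s := by linarith
  have hlog : HasDerivAt (fun s : ℝ => Real.log (1+s)) (1/(1+s)) s := by
    have h : HasDerivAt (fun s : ℝ => 1+s) 1 s := by
      simpa using (hasDerivAt_id s).const_add 1
    simpa [Function.comp_def] using (Real.hasDerivAt_log h1.ne').comp s h
  have hnum : HasDerivAt (fun s : ℝ => s*(s+2)) (2*s+2) s := by
    have h := ((hasDerivAt_id s).mul ((hasDerivAt_id s).add_const 2))
    refine h.congr_deriv ?_
    simp
    ring
  have hden : HasDerivAt (fun s : ℝ => 2*(s+1)) 2 s := by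
    simpa using ((hasDerivAt_id s).add_const 1).const_mul 2
  have hrat := hnum.div hden (by positivity : (2*(s+1)) ≠ 0)
  have := hrat.sub hlog
  refine this.congr_deriv ?_
  field_simp
  ring

lemma logB {s : ℝ} (hs : 0 ≤ s) : Real.log (1+s) ≤ s*(s+2)/(2*(s+1)) := by
  set h : ℝ → ℝ := fun s => s*(s+2)/(2*(s+1)) - Real.log (1+s) with hh
  have mono : MonotoneOn h (Ici 0) := by
    apply monotoneOn_of_deriv_nonneg (convex_Ici 0)
    · intro t ht
      exact (hderB ht).continuousAt.continuousWithinAt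
    · intro t ht
      rw [interior_Ici] at ht
      exact (hderB ht.le).differentiableAt.differentiableWithinAt
    · intro t ht
      rw [interior_Ici] at ht
      rw [(hderB ht.le).deriv]
      positivity
  have h0 : h 0 = 0 := by simp [hh]
  have := mono self_mem_Ici (mem_Ici.2 hs) hs
  rw [h0] at this
  have : 0 ≤ s*(s+2)/(2*(s+1)) - Real.log (1+s) := this
  linarith




lemma hderF (a k u : ℝ) (ha : 0 < a) (hk : 0 < k) (hu : 0 ≤ u) :
    HasDerivAt (fun u : ℝ => -((1/k) * (Real.exp (-u) * Real.log (1 + k/(a+u)))))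
      (Real.exp (-u) * ((1/k) * Real.log (1 + k/(a+u)) + 1/((a+u)*(a+u+k)))) u := by
  have hv : 0 < a + u := by linarith
  have hvk : 0 < a + u + k := by linarith
  have hargpos : 0 < 1 + k/(a+u) := by positivity
  have hexp : HasDerivAt (fun u : ℝ => Real.exp (-u)) (-Real.exp (-u)) u := by
    simpa [Function.comp_def] using (Real.hasDerivAt_exp (-u)).comp u ((hasDerivAt_id u).neg)
  have h1 : HasDerivAt (fun u : ℝ => a + u) 1 u := by
    simpa using (hasDerivAt_id u).const_add a
  have h2 : HasDerivAt (fun u : ℝ => (a+u)⁻¹) (-(1/(a+u)^2)) u := by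
    have := h1.inv hv.ne'
    refine this.congr_deriv ?_
    field_simp
  have hinner : HasDerivAt (fun u : ℝ => 1 + k/(a+u)) (-(k/(a+u)^2)) u := by
    have := (h2.const_mul k).const_add 1
    have e : ∀ u : ℝ, 1 + k * (a+u)⁻¹ = 1 + k/(a+u) := fun u => by rw [div_eq_mul_inv]
    simp only [e] at this
    refine this.congr_deriv ?_
    field_simp
  have hlog : HasDerivAt (fun u : ℝ => Real.log (1 + k/(a+u)))
      ((-(k/(a+u)^2))/(1 + k/(a+u))) u := by
    have := (Real.hasDerivAt_log hargpos.ne').comp u hinner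
    simpa [div_eq_mul_inv, mul_comm, Function.comp_def] using this
  have hmul := hexp.mul hlog
  have := (hmul.const_mul (1/k)).neg
  refine this.congr_deriv ?_
  field_simp
  ring

lemma contF (a k : ℝ) (ha : 0 < a) (hk : 0 < k) :
    ContinuousOn (fun u : ℝ =>
      Real.exp (-u) * ((1/k) * Real.log (1 + k/(a+u)) + 1/((a+u)*(a+u+k)))) (Ioi 0) := by
  have hv : ∀ u ∈ Ioi (0:ℝ), (0:ℝ) < a + u := fun u hu => by
    have : (0:ℝ) < u := hu
    linarith
  have hca : ContinuousOn (fun u : ℝ => a + u) (Ioi 0) :=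
    (continuous_const.add continuous_id).continuousOn
  apply ContinuousOn.mul
  · exact (Real.continuous_exp.comp continuous_neg).continuousOn
  · apply ContinuousOn.add
    · apply ContinuousOn.mul continuousOn_const
      apply ContinuousOn.log
      · exact continuousOn_const.add (continuousOn_const.div hca fun u hu => (hv u hu).ne')
      · intro u hu
        have := hv u hu
        positivity
    · apply ContinuousOn.div continuousOn_const
      · exact hca.mul (hca.add continuousOn_const)
      · intro u hu
        have := hv u hu
        positivity

lemma intExpC (C : ℝ) : IntegrableOn (fun u : ℝ => C * Real.exp (-u)) (Ioi 0) := by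
  have h : IntegrableOn (fun u : ℝ => Real.exp (-(1:ℝ)*u)) (Ioi 0) :=
    exp_neg_integrableOn_Ioi 0 one_pos
  have h2 : IntegrableOn (fun u : ℝ => Real.exp (-u)) (Ioi 0) := by
    simpa using h
  exact h2.const_mul C

lemma intF (a k : ℝ) (ha : 0 < a) (hk : 0 < k) :
    IntegrableOn (fun u : ℝ =>
      Real.exp (-u) * ((1/k) * Real.log (1 + k/(a+u)) + 1/((a+u)*(a+u+k)))) (Ioi 0) := by
  apply Integrable.mono' (intExpC ((1/k) * Real.log (1 + k/a) + 1/(a*(a+k))))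
  · exact (contF a k ha hk).aestronglyMeasurable measurableSet_Ioi
  · filter_upwards [ae_restrict_mem measurableSet_Ioi] with u hu
    have hu' : (0:ℝ) < u := hu
    have hv : (0:ℝ) < a + u := by linarith
    have hlog0 : 0 ≤ Real.log (1 + k/(a+u)) := by
      apply Real.log_nonneg
      have : 0 ≤ k/(a+u) := by positivity
      linarith
    have hb : (1/k) * Real.log (1 + k/(a+u)) + 1/((a+u)*(a+u+k))
        ≤ (1/k) * Real.log (1 + k/a) + 1/(a*(a+k)) := by
      gcongr
      · linarith
      · linarith
      · linarith
    have hnn : 0 ≤ (1/k) * Real.log (1 + k/(a+u)) + 1/((a+u)*(a+u+k)) := by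
      have : (0:ℝ) ≤ 1/((a+u)*(a+u+k)) := by positivity
      have : (0:ℝ) ≤ (1/k) * Real.log (1 + k/(a+u)) := mul_nonneg (by positivity) hlog0
      linarith
    rw [Real.norm_eq_abs, abs_of_nonneg (mul_nonneg (Real.exp_pos _).le hnn)]
    calc Real.exp (-u) * ((1/k) * Real.log (1 + k/(a+u)) + 1/((a+u)*(a+u+k)))
        ≤ Real.exp (-u) * ((1/k) * Real.log (1 + k/a) + 1/(a*(a+k))) := by
          apply mul_le_mul_of_nonneg_left hb (Real.exp_pos _).le
      _ = ((1/k) * Real.log (1 + k/a) + 1/(a*(a+k))) * Real.exp (-u) := by ring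

lemma ftc (a k : ℝ) (ha : 0 < a) (hk : 0 < k) :
    ∫ u in Ioi (0:ℝ), Real.exp (-u) * ((1/k) * Real.log (1 + k/(a+u)) + 1/((a+u)*(a+u+k)))
      = (1/k) * Real.log (1 + k/a) := by
  have htends : Tendsto (fun u : ℝ => -((1/k) * (Real.exp (-u) * Real.log (1 + k/(a+u)))))
      atTop (nhds 0) := by
    have h1 : Tendsto (fun u : ℝ => Real.exp (-u)) atTop (nhds 0) :=
      Real.tendsto_exp_neg_atTop_nhds_zero
    have ha' : Tendsto (fun u : ℝ => a + u) atTop atTop :=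
      tendsto_atTop_add_const_left _ a tendsto_id
    have hdiv : Tendsto (fun u : ℝ => k/(a+u)) atTop (nhds 0) :=
      Tendsto.div_atTop tendsto_const_nhds ha'
    have harg : Tendsto (fun u : ℝ => 1 + k/(a+u)) atTop (nhds 1) := by
      simpa using tendsto_const_nhds.add hdiv
    have h2 : Tendsto (fun u : ℝ => Real.log (1 + k/(a+u))) atTop (nhds 0) := by
      have := (Real.continuousAt_log one_ne_zero).tendsto.comp harg
      simpa [Function.comp_def] using this
    have := ((h1.mul h2).const_mul (1/k)).neg
    simpa using this
  have := integral_Ioi_of_hasDerivAt_of_tendsto'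
    (f := fun u => -((1/k) * (Real.exp (-u) * Real.log (1 + k/(a+u)))))
    (fun u hu => hderF a k u ha hk hu) (intF a k ha hk) htends
  rw [this]
  simp





lemma intMain (a : ℝ) (ha : 0 < a) :
    IntegrableOn (fun u : ℝ => Real.exp (-u) / (a+u)) (Ioi 0) := by
  apply Integrable.mono' (intExpC (1/a))
  · apply ContinuousOn.aestronglyMeasurable _ measurableSet_Ioi
    exact ContinuousOn.div (Real.continuous_exp.comp continuous_neg).continuousOn
      (continuous_const.add continuous_id).continuousOn
      (fun u hu => by have : (0:ℝ) < u := hu; positivity)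
  · filter_upwards [ae_restrict_mem measurableSet_Ioi] with u hu
    have hu' : (0:ℝ) < u := hu
    have hv : (0:ℝ) < a + u := by linarith
    rw [Real.norm_eq_abs, abs_of_nonneg (by positivity)]
    have h1 : Real.exp (-u)/(a+u) ≤ Real.exp (-u)/a := by
      gcongr
      linarith
    have h2 : (1/a) * Real.exp (-u) = Real.exp (-u)/a := by ring
    linarith

lemma shift (x : ℝ) (f : ℝ → ℝ) :
    ∫ t in Ioi x, f t = ∫ u in Ioi (0:ℝ), f (u + x) := by
  have h := (measurePreserving_add_right (volume : Measure ℝ) x).setIntegral_image_emb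
    (MeasurableEquiv.addRight x).measurableEmbedding f (Ioi 0)
  simpa [image_add_const_Ioi] using h


lemma genU (a : ℝ) (ha : 0 < a) :
    ∫ u in Ioi (0:ℝ), Real.exp (-u) / (a+u) ≤ Real.log (1 + 1/a) := by
  have h := ftc a 1 ha one_pos
  have hle : (∫ u in Ioi (0:ℝ), Real.exp (-u)/(a+u))
      ≤ ∫ u in Ioi (0:ℝ),
          Real.exp (-u) * ((1/1) * Real.log (1 + 1/(a+u)) + 1/((a+u)*(a+u+1))) := by
    apply setIntegral_mono_on (intMain a ha) (intF a 1 ha one_pos) measurableSet_Ioi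
    intro u hu
    have hu' : (0:ℝ) < u := hu
    have hv : (0:ℝ) < a + u := by linarith
    have key := logA hv
    have hscal : (a+u)⁻¹ ≤ (1/1) * Real.log (1 + 1/(a+u)) + 1/((a+u)*(a+u+1)) := by
      have e : (a+u)⁻¹ = 1/(a+u) := (one_div _).symm
      rw [e]
      linarith
    calc Real.exp (-u)/(a+u) = Real.exp (-u) * (a+u)⁻¹ := div_eq_mul_inv _ _
      _ ≤ _ := mul_le_mul_of_nonneg_left hscal (Real.exp_pos _).le
  calc (∫ u in Ioi (0:ℝ), Real.exp (-u)/(a+u)) ≤ _ := hle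
    _ = (1/1) * Real.log (1 + 1/a) := h
    _ = Real.log (1 + 1/a) := by norm_num

lemma genL (a : ℝ) (ha : 0 < a) :
    (1/2) * Real.log (1 + 2/a) ≤ ∫ u in Ioi (0:ℝ), Real.exp (-u) / (a+u) := by
  have h := ftc a 2 ha two_pos
  rw [← h]
  apply setIntegral_mono_on (intF a 2 ha two_pos) (intMain a ha) measurableSet_Ioi
  intro u hu
  have hu' : (0:ℝ) < u := hu
  have hv : (0:ℝ) < a + u := by linarith
  have key := logB (s := 2/(a+u)) (by positivity)
  have hs : (2/(a+u))*((2/(a+u))+2)/(2*((2/(a+u))+1)) = 2*(1+(a+u))/((a+u)*(a+u+2)) := by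
    have h1 : a + u + 2 ≠ 0 := by linarith
    field_simp
    ring
  rw [hs] at key
  have e : (1/2)*(2*(1+(a+u))/((a+u)*(a+u+2))) + 1/((a+u)*(a+u+2)) = 1/(a+u) := by
    have h1 : a + u + 2 ≠ 0 := by linarith
    field_simp
    ring
  have hscal : (1/2) * Real.log (1 + 2/(a+u)) + 1/((a+u)*(a+u+2)) ≤ (a+u)⁻¹ := by
    have e2 : (a+u)⁻¹ = 1/(a+u) := (one_div _).symm
    rw [e2]
    linarith
  calc Real.exp (-u) * ((1/2) * Real.log (1 + 2/(a+u)) + 1/((a+u)*(a+u+2)))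
      ≤ Real.exp (-u) * (a+u)⁻¹ := mul_le_mul_of_nonneg_left hscal (Real.exp_pos _).le
    _ = Real.exp (-u)/(a+u) := (div_eq_mul_inv _ _).symm

lemma exp_mul_E1 (x : ℝ) (hx : 0 < x) :
    Real.exp x * expIntegralE1 x = ∫ u in Ioi (0:ℝ), Real.exp (-u) / (x+u) := by
  rw [expIntegralE1, shift x (fun t => Real.exp (-t) / t), ← integral_const_mul]
  apply setIntegral_congr_fun measurableSet_Ioi
  intro u hu
  have hu' : (0:ℝ) < u := hu
  have h1 : Real.exp x * Real.exp (-(u+x)) = Real.exp (-u) := by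
    rw [← Real.exp_add]
    ring_nf
  calc Real.exp x * (Real.exp (-(u+x)) / (u+x))
      = (Real.exp x * Real.exp (-(u+x))) / (u+x) := (mul_div_assoc _ _ _).symm
    _ = Real.exp (-u) / (x+u) := by rw [h1, add_comm u x]

end ExpBoundsAux

/-- For all x > 0, (x/2)·ln(1 + 2/x) ≤ x·eˣ·E₁(x) ≤ x·ln(1 + 1/x); and consequently,
for ξ exponentially distributed with mean μ > 0 and b > 0,
  (b/(2μ))·ln(1 + 2μ/b) ≤ E[b/(b+ξ)] ≤ (b/μ)·ln(1 + μ/b). -/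
theorem expIntegral_bounds (μ b : ℝ) (hμ : 0 < μ) (hb : 0 < b) :
    (∀ x : ℝ, 0 < x →
      (x / 2) * Real.log (1 + 2 / x) ≤ x * Real.exp x * expIntegralE1 x
      ∧ x * Real.exp x * expIntegralE1 x ≤ x * Real.log (1 + 1 / x))
    ∧ ((b / (2 * μ)) * Real.log (1 + 2 * μ / b)
          ≤ ∫ x in Set.Ioi (0 : ℝ), (b / (b + x)) * ((1 / μ) * Real.exp (-x / μ))
       ∧ ∫ x in Set.Ioi (0 : ℝ), (b / (b + x)) * ((1 / μ) * Real.exp (-x / μ))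
          ≤ (b / μ) * Real.log (1 + μ / b)) := by
  constructor
  · intro x hx
    have hE : x * Real.exp x * expIntegralE1 x
        = x * ∫ u in Ioi (0:ℝ), Real.exp (-u) / (x+u) := by
      rw [mul_assoc, ExpBoundsAux.exp_mul_E1 x hx]
    constructor
    · have := mul_le_mul_of_nonneg_left (ExpBoundsAux.genL x hx) hx.le
      rw [hE]
      calc (x/2) * Real.log (1 + 2/x) = x * ((1/2) * Real.log (1 + 2/x)) := by ring
        _ ≤ _ := this
    · have := mul_le_mul_of_nonneg_left (ExpBoundsAux.genU x hx) hx.le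
      rw [hE]
      exact this
  · set a : ℝ := b / μ with ha_def
    have ha : 0 < a := by positivity
    have hscale : (∫ x in Set.Ioi (0 : ℝ), (b / (b + x)) * ((1 / μ) * Real.exp (-x / μ)))
        = a * ∫ u in Ioi (0:ℝ), Real.exp (-u) / (a+u) := by
      have hμi : (0:ℝ) < μ⁻¹ := by positivity
      have h := integral_comp_mul_left_Ioi (fun u => Real.exp (-u) / (a+u)) 0 hμi
      have h2 : (∫ x in Ioi (0:ℝ), Real.exp (-(μ⁻¹ * x)) / (a + μ⁻¹ * x))
          = μ * ∫ u in Ioi (0:ℝ), Real.exp (-u) / (a+u) := by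
        simpa [smul_eq_mul, inv_inv] using h
      have h3 : (∫ x in Set.Ioi (0 : ℝ), (b / (b + x)) * ((1 / μ) * Real.exp (-x / μ)))
          = (b/μ^2) * ∫ x in Ioi (0:ℝ), Real.exp (-(μ⁻¹ * x)) / (a + μ⁻¹ * x) := by
        rw [← integral_const_mul]
        apply setIntegral_congr_fun measurableSet_Ioi
        intro x hxx
        have hx' : (0:ℝ) < x := hxx
        have hbx : (0:ℝ) < b + x := by linarith
        dsimp only
        have e1 : a + μ⁻¹ * x = (b + x)/μ := by
          rw [ha_def]
          field_simp
        rw [e1]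
        have e2 : -(μ⁻¹ * x) = -x/μ := by
          field_simp
        rw [e2]
        rw [div_div_eq_mul_div]
        field_simp
      rw [h3, h2, ha_def]
      field_simp
    constructor
    · have := mul_le_mul_of_nonneg_left (ExpBoundsAux.genL a ha) ha.le
      rw [hscale]
      have e1 : 2 / a = 2 * μ / b := by
        rw [ha_def]
        field_simp
      have e2 : b / (2*μ) * Real.log (1 + 2*μ/b) = a * ((1/2) * Real.log (1 + 2/a)) := by
        rw [e1, ha_def]
        ring
      rw [e2]
      exact this
    · have := mul_le_mul_of_nonneg_left (ExpBoundsAux.genU a ha) ha.le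
      rw [hscale]
      have e1 : 1 / a = μ / b := by
        rw [ha_def]
        field_simp
      have e2 : (b/μ) * Real.log (1 + μ/b) = a * Real.log (1 + 1/a) := by
        rw [e1, ha_def]
      rw [e2]
      exact this
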